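/- Let G be a group with elements a_1, ..., a_{g-1}, u_1, ..., u_{g-1} satisfying the braid relations within each family, a_i u_j = u_j a_i for |i-j|>1, a_i u_{i+1} u_i = u_{i+1} u_i a_{i+1}, a_{i+1} u_i u_{i+1} = u_i u_{i+1} a_i, a_1 u_1 a_1 = u_1, and u_2 a_1 a_2 u_1 = a_1 a_2. Let Δ_k be defined by Δ_1 = 1, Δ_k = (u_1 ⋯ u_{k-1}) Δ_{k-1}. Then for all 2 ≤ k ≤ g and 1 ≤ i ≤ k-1 one has Δ_k a_i = a_{k-i}^{-1} Δ_k. -/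
import Mathlib


variable {G : Type*} [Group G]

/-- `prodAsc f m = f 1 * f 2 * ⋯ * f m` (empty product for `m = 0`). -/
def prodAsc (f : ℕ → G) (m : ℕ) : G :=
  ((List.range m).map (fun i => f (i + 1))).prod

/-- `prodDesc f m = f m * ⋯ * f 2 * f 1` (empty product for `m = 0`). -/
def prodDesc (f : ℕ → G) (m : ℕ) : G :=
  (((List.range m).reverse).map (fun i => f (i + 1))).prod

/-- The fundamental braid element: `Δ 0 = Δ 1 = 1`, `Δ (m+1) = (u 1 ⋯ u m) * Δ m`. -/
def braidDelta (u : ℕ → G) : ℕ → G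
  | 0 => 1
  | m + 1 => prodAsc u m * braidDelta u m

lemma prodAsc_succ' (f : ℕ → G) (m : ℕ) :
    prodAsc f (m + 1) = prodAsc f m * f (m + 1) := by
  simp [prodAsc, List.range_succ]

lemma prodDesc_succ' (f : ℕ → G) (m : ℕ) :
    prodDesc f (m + 1) = f (m + 1) * prodDesc f m := by
  simp [prodDesc, List.range_succ]

lemma braidDelta_succ' (u : ℕ → G) (m : ℕ) :
    braidDelta u (m + 1) = prodAsc u m * braidDelta u m := rfl

lemma commute_prodAsc' (f : ℕ → G) (x : G) (m : ℕ)
    (h : ∀ j, 1 ≤ j → j ≤ m → x * f j = f j * x) :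
    x * prodAsc f m = prodAsc f m * x := by
  refine Commute.list_prod_right _ _ ?_
  intro y hy
  simp only [List.mem_map, List.mem_range] at hy
  obtain ⟨i, hi, rfl⟩ := hy
  exact h (i + 1) (by omega) (by omega)

lemma commute_prodDesc' (f : ℕ → G) (x : G) (m : ℕ)
    (h : ∀ j, 1 ≤ j → j ≤ m → x * f j = f j * x) :
    x * prodDesc f m = prodDesc f m * x := by
  refine Commute.list_prod_right _ _ ?_
  intro y hy
  simp only [List.mem_map, List.mem_reverse, List.mem_range] at hy
  obtain ⟨i, hi, rfl⟩ := hy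
  exact h (i + 1) (by omega) (by omega)

lemma commute_braidDelta' (u : ℕ → G) (x : G) (m : ℕ)
    (h : ∀ j, 1 ≤ j → j + 1 ≤ m → x * u j = u j * x) :
    x * braidDelta u m = braidDelta u m * x := by
  induction m with
  | zero => simp [braidDelta]
  | succ n ih =>
    have h1 : x * prodAsc u n = prodAsc u n * x :=
      commute_prodAsc' u x n (fun j hj1 hj2 => h j hj1 (by omega))
    have h2 : x * braidDelta u n = braidDelta u n * x :=
      ih (fun j hj1 hj2 => h j hj1 (by omega))
    rw [braidDelta_succ', ← mul_assoc, h1, mul_assoc, h2, ← mul_assoc]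

lemma inv_conj' {x y z : G} (h : x * y = z * x) : x * y⁻¹ = z⁻¹ * x := by
  have hz : z = x * y * x⁻¹ := by rw [h]; group
  rw [hz]; group

lemma deltaV (g : ℕ) (u : ℕ → G)
    (hu1 : ∀ i j, 1 ≤ i → i + 2 ≤ j → j ≤ g - 1 → u i * u j = u j * u i) :
    ∀ m, m ≤ g - 1 → braidDelta u (m + 1) = braidDelta u m * prodDesc u m := by
  intro m
  induction m with
  | zero => intro _; simp [braidDelta, prodAsc, prodDesc]
  | succ n ih =>
    intro hn
    have hcomm : u (n + 1) * braidDelta u n = braidDelta u n * u (n + 1) :=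
      commute_braidDelta' u (u (n + 1)) n (fun j hj1 hj2 =>
        (hu1 j (n + 1) hj1 (by omega) (by omega)).symm)
    calc braidDelta u (n + 1 + 1)
        = prodAsc u n * u (n + 1) * braidDelta u (n + 1) := by
          rw [braidDelta_succ', prodAsc_succ']
      _ = prodAsc u n * u (n + 1) * (braidDelta u n * prodDesc u n) := by
          rw [ih (by omega)]
      _ = prodAsc u n * (u (n + 1) * braidDelta u n) * prodDesc u n := by group
      _ = prodAsc u n * (braidDelta u n * u (n + 1)) * prodDesc u n := by rw [hcomm]
      _ = (prodAsc u n * braidDelta u n) * (u (n + 1) * prodDesc u n) := by group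
      _ = braidDelta u (n + 1) * prodDesc u (n + 1) := by
          rw [braidDelta_succ', prodDesc_succ']

lemma lemL1 (g : ℕ) (a u : ℕ → G)
    (hC1 : ∀ i j, 1 ≤ i → i ≤ g - 1 → 1 ≤ j → j ≤ g - 1 → (i + 2 ≤ j ∨ j + 2 ≤ i) →
      a i * u j = u j * a i)
    (hC3 : ∀ i, 1 ≤ i → i ≤ g - 2 → a (i + 1) * u i * u (i + 1) = u i * u (i + 1) * a i) :
    ∀ k i, 1 ≤ i → i + 1 ≤ k → k ≤ g - 1 →
      prodAsc u k * a i = a (i + 1) * prodAsc u k := by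
  intro k
  induction k with
  | zero => intro i _ h _; omega
  | succ n ih =>
    intro i hi hik hkg
    rcases Nat.lt_or_ge (i + 1) (n + 1) with hlt | hge
    · have h1 : a i * u (n + 1) = u (n + 1) * a i :=
        hC1 i (n + 1) hi (by omega) (by omega) (by omega) (Or.inl (by omega))
      calc prodAsc u (n + 1) * a i
          = prodAsc u n * (u (n + 1) * a i) := by rw [prodAsc_succ']; group
        _ = prodAsc u n * (a i * u (n + 1)) := by rw [h1]
        _ = (prodAsc u n * a i) * u (n + 1) := by group
        _ = (a (i + 1) * prodAsc u n) * u (n + 1) := by rw [ih i hi (by omega) (by omega)]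
        _ = a (i + 1) * prodAsc u (n + 1) := by rw [prodAsc_succ']; group
    · have hn' : n = i := by omega
      subst hn'
      obtain ⟨j, rfl⟩ : ∃ j, n = j + 1 := ⟨n - 1, by omega⟩
      have h3 := hC3 (j + 1) (by omega) (by omega)
      have hcomm : a (j + 1 + 1) * prodAsc u j = prodAsc u j * a (j + 1 + 1) :=
        commute_prodAsc' u (a (j + 1 + 1)) j (fun l hl1 hl2 =>
          hC1 (j + 2) l (by omega) (by omega) hl1 (by omega) (Or.inr (by omega)))
      calc prodAsc u (j + 1 + 1) * a (j + 1)
          = prodAsc u j * (u (j + 1) * u (j + 1 + 1) * a (j + 1)) := by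
            rw [prodAsc_succ', prodAsc_succ']; group
        _ = prodAsc u j * (a (j + 1 + 1) * u (j + 1) * u (j + 1 + 1)) := by rw [← h3]
        _ = (a (j + 1 + 1) * prodAsc u j) * (u (j + 1) * u (j + 1 + 1)) := by
            rw [← mul_assoc, ← mul_assoc, ← hcomm]; group
        _ = a (j + 1 + 1) * prodAsc u (j + 1 + 1) := by
            rw [prodAsc_succ', prodAsc_succ']; group

lemma lemL2 (g : ℕ) (a u : ℕ → G)
    (hC1 : ∀ i j, 1 ≤ i → i ≤ g - 1 → 1 ≤ j → j ≤ g - 1 → (i + 2 ≤ j ∨ j + 2 ≤ i) →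
      a i * u j = u j * a i)
    (hC2 : ∀ i, 1 ≤ i → i ≤ g - 2 → a i * u (i + 1) * u i = u (i + 1) * u i * a (i + 1)) :
    ∀ n, n + 2 ≤ g - 1 →
      prodDesc u (n + 2) * a (n + 2) = a (n + 1) * prodDesc u (n + 2) := by
  intro n hn
  have hcomm : a (n + 2) * prodDesc u n = prodDesc u n * a (n + 2) :=
    commute_prodDesc' u (a (n + 2)) n (fun l hl1 hl2 =>
      hC1 (n + 2) l (by omega) (by omega) hl1 (by omega) (Or.inr (by omega)))
  have h2 := hC2 (n + 1) (by omega) (by omega)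
  have e1 : prodDesc u (n + 2) = u (n + 2) * u (n + 1) * prodDesc u n := by
    have : prodDesc u (n + 1 + 1) = u (n + 1 + 1) * prodDesc u (n + 1) := prodDesc_succ' u (n + 1)
    rw [show n + 2 = n + 1 + 1 from rfl, this, prodDesc_succ']; group
  calc prodDesc u (n + 2) * a (n + 2)
      = u (n + 2) * u (n + 1) * (prodDesc u n * a (n + 2)) := by rw [e1]; group
    _ = u (n + 2) * u (n + 1) * (a (n + 2) * prodDesc u n) := by rw [hcomm]
    _ = (u (n + 1 + 1) * u (n + 1) * a (n + 1 + 1)) * prodDesc u n := by group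
    _ = (a (n + 1) * u (n + 1 + 1) * u (n + 1)) * prodDesc u n := by rw [← h2]
    _ = a (n + 1) * prodDesc u (n + 2) := by rw [e1]; group

/-- relation (E1): Δ_k a_i = a_{k-i}⁻¹ Δ_k for 2 ≤ k ≤ g, 1 ≤ i ≤ k-1. -/
theorem rel_E1 (g : ℕ) (a u : ℕ → G)
    (ha1 : ∀ i j, 1 ≤ i → i + 2 ≤ j → j ≤ g - 1 → a i * a j = a j * a i)
    (ha2 : ∀ i, 1 ≤ i → i + 1 ≤ g - 1 → a i * a (i + 1) * a i = a (i + 1) * a i * a (i + 1))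
    (hu1 : ∀ i j, 1 ≤ i → i + 2 ≤ j → j ≤ g - 1 → u i * u j = u j * u i)
    (hu2 : ∀ i, 1 ≤ i → i + 1 ≤ g - 1 → u i * u (i + 1) * u i = u (i + 1) * u i * u (i + 1))
    (hC1 : ∀ i j, 1 ≤ i → i ≤ g - 1 → 1 ≤ j → j ≤ g - 1 → (i + 2 ≤ j ∨ j + 2 ≤ i) →
      a i * u j = u j * a i)
    (hC2 : ∀ i, 1 ≤ i → i ≤ g - 2 → a i * u (i + 1) * u i = u (i + 1) * u i * a (i + 1))
    (hC3 : ∀ i, 1 ≤ i → i ≤ g - 2 → a (i + 1) * u i * u (i + 1) = u i * u (i + 1) * a i)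
    (hC4 : a 1 * u 1 * a 1 = u 1)
    (hC5 : u 2 * a 1 * a 2 * u 1 = a 1 * a 2)
    :
    ∀ k i, 2 ≤ k → k ≤ g → 1 ≤ i → i ≤ k - 1 →
      braidDelta u k * a i = (a (k - i))⁻¹ * braidDelta u k := by
  intro k
  induction k with
  | zero => intro i h2 _ _ _; omega
  | succ n ih =>
    intro i h2 hkg h1i hik
    rcases Nat.lt_or_ge n 2 with hn | hn
    · -- base case: n = 1, k = 2, i = 1
      have hn1 : n = 1 := by omega
      subst hn1
      have hi1 : i = 1 := by omega
      subst hi1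
      have hidx : 1 + 1 - 1 = 1 := rfl
      rw [hidx]
      have hΔ : braidDelta u (1 + 1) = u 1 := by
        rw [braidDelta_succ']
        simp [braidDelta, prodAsc, List.range_succ]
      rw [hΔ]
      conv_rhs => rw [← hC4]
      group
    · have hng : n ≤ g - 1 := by omega
      rcases Nat.lt_or_ge i n with hilt | hige
      · -- case 1 ≤ i ≤ n - 1
        have hrec := ih i (by omega) (by omega) h1i (by omega)
        have hL1 := lemL1 g a u hC1 hC3 n (n - i) (by omega) (by omega) hng
        have hL1' : prodAsc u n * (a (n - i))⁻¹ = (a (n - i + 1))⁻¹ * prodAsc u n :=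
          inv_conj' hL1
        have hidx : n + 1 - i = n - i + 1 := by omega
        rw [hidx]
        calc braidDelta u (n + 1) * a i
            = prodAsc u n * (braidDelta u n * a i) := by rw [braidDelta_succ']; group
          _ = prodAsc u n * ((a (n - i))⁻¹ * braidDelta u n) := by rw [hrec]
          _ = (prodAsc u n * (a (n - i))⁻¹) * braidDelta u n := by group
          _ = ((a (n - i + 1))⁻¹ * prodAsc u n) * braidDelta u n := by rw [hL1']
          _ = (a (n - i + 1))⁻¹ * braidDelta u (n + 1) := by rw [braidDelta_succ']; group
      · -- case i = n
        have hin : i = n := by omega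
        subst hin
        obtain ⟨m, rfl⟩ : ∃ m, i = m + 2 := ⟨i - 2, by omega⟩
        have hD := deltaV g u hu1 (m + 2) (by omega)
        have hL2 := lemL2 g a u hC1 hC2 m (by omega)
        have hrec := ih (m + 1) (by omega) (by omega) (by omega) (by omega)
        have hidx : m + 2 - (m + 1) = 1 := by omega
        rw [hidx] at hrec
        have hidx2 : m + 2 + 1 - (m + 2) = 1 := by omega
        rw [hidx2]
        calc braidDelta u (m + 2 + 1) * a (m + 2)
            = braidDelta u (m + 2) * (prodDesc u (m + 2) * a (m + 2)) := by rw [hD]; group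
          _ = braidDelta u (m + 2) * (a (m + 1) * prodDesc u (m + 2)) := by rw [hL2]
          _ = (braidDelta u (m + 2) * a (m + 1)) * prodDesc u (m + 2) := by group
          _ = ((a 1)⁻¹ * braidDelta u (m + 2)) * prodDesc u (m + 2) := by rw [hrec]
          _ = (a 1)⁻¹ * braidDelta u (m + 2 + 1) := by rw [hD]; group
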